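/- arXiv:2112.05894 — 2 statements merged into one kernel-verified Lean document; each statement's English description precedes it below -/
import Mathlib

section
/- Let (P,<) be a finite poset, P* ⊆ P a subset containing all minimal and all maximal elements of (P,<), P∖P* = C ⊔ O a partition, and K an order ideal of (P*,<). Then the marked chain-order polytope O_{C,O}(P,<,ω_K) equals the convex hull of the points 1_{A(J)}, where J ranges over the order ideals of (P,<) with J ∩ P* = K and A(J) = (J ∩ (P* ∪ O)) ∪ max_< J. -/
open Pointwise

/-- `J` is an order ideal (lower set) with respect to the strict order relation `r`. -/
def IsLowerIdeal {P : Type*} (r : P → P → Prop) (J : Set P) : Prop :=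
  ∀ ⦃p q : P⦄, r p q → q ∈ J → p ∈ J

/-- The set of `r`-maximal elements of `J`. -/
def maxElems {P : Type*} (r : P → P → Prop) (J : Set P) : Set P :=
  {p ∈ J | ∀ q ∈ J, ¬ r p q}

/-- The 0/1 indicator vector of `A ⊆ P`, as a point of `ℝ^P`. -/
noncomputable def ind {P : Type*} (A : Set P) : P → ℝ :=
  A.indicator 1

/-- The order ideal of `(P, r)` generated by `A`. -/
def genIdeal {P : Type*} (r : P → P → Prop) (A : Set P) : Set P :=
  {p | ∃ q ∈ A, p = q ∨ r p q}

/-- The Hibi–Li operation `J1 *' J2` relative to the order `r`: the order ideal of `(P, r)`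
generated by `(J1 ∩ J2) ∩ (max_r J1 ∪ max_r J2)`. -/
def starOp {P : Type*} (r : P → P → Prop) (J1 J2 : Set P) : Set P :=
  genIdeal r ((J1 ∩ J2) ∩ (maxElems r J1 ∪ maxElems r J2))

/-- The relative poset polytope `R(P, lt, lt')`: the convex hull of the points
`1_{max_{lt'} J}` over all order ideals `J` of `(P, lt)`. -/
noncomputable def RPP {P : Type*} (lt lt' : P → P → Prop) : Set (P → ℝ) :=
  convexHull ℝ {x | ∃ J : Set P, IsLowerIdeal lt J ∧ x = ind (maxElems lt' J)}

/-- The dilation `m·Q = {m·x : x ∈ Q}`. -/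
def dilate {P : Type*} (m : ℕ) (Q : Set (P → ℝ)) : Set (P → ℝ) :=
  (fun x => (m : ℝ) • x) '' Q

/-- The order polytope of `(P, lt)`. -/
def orderPolytope {P : Type*} (lt : P → P → Prop) : Set (P → ℝ) :=
  {x | (∀ p, 0 ≤ x p ∧ x p ≤ 1) ∧ ∀ p q, lt q p → x p ≤ x q}

/-- The chain polytope of `(P, lt)`. -/
def chainPolytope {P : Type*} (lt : P → P → Prop) : Set (P → ℝ) :=
  {x | (∀ p, 0 ≤ x p) ∧ ∀ (k : ℕ) (c : Fin k → P),
    (∀ i j : Fin k, i < j → lt (c i) (c j)) → (∑ i, x (c i)) ≤ 1}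


/-- The fundamental marked relative poset polytope `R_{ω_K}(P, lt, lt')`: the convex hull
of the points `1_{max_{lt'} J}` over order ideals `J` of `(P, lt)` with `J ∩ P* = K`. -/
noncomputable def RPPfund {P : Type*} (lt lt' : P → P → Prop) (Pstar K : Set P) :
    Set (P → ℝ) :=
  convexHull ℝ
    {x | ∃ J : Set P, IsLowerIdeal lt J ∧ J ∩ Pstar = K ∧ x = ind (maxElems lt' J)}

/-- The set `𝒥*` of order ideals of the subposet `(P*, lt)`. -/
def idealsOn {P : Type*} (lt : P → P → Prop) (Pstar : Set P) : Set (Set P) :=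
  {K | K ⊆ Pstar ∧ ∀ p q : P, p ∈ Pstar → q ∈ Pstar → lt p q → q ∈ K → p ∈ K}

/-- The marked relative poset polytope for a coefficient function `α : 𝒥* → ℕ`:
the Minkowski sum `Σ_{K ∈ 𝒥*} α_K · R_{ω_K}(P, lt, lt')`. -/
noncomputable def RPPmarked {P : Type*} [Fintype P] (lt lt' : P → P → Prop)
    (Pstar : Set P) (α : Set P → ℕ) : Set (P → ℝ) :=
  ∑ K ∈ (Set.toFinite (idealsOn lt Pstar)).toFinset, dilate (α K) (RPPfund lt lt' Pstar K)


/-- The marked chain-order polytope `O_{C,O}(P, lt, λ)` for a real marking `lam`: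
points `x` with `x_p = λ_p` on `P*`, `x_p ≥ 0` on `C`, and
`x_{p_1} + ⋯ + x_{p_r} ≤ x_a − x_b` for every chain `a < p_1 < ⋯ < p_r < b` (`r ≥ 0`)
with `a, b ∈ P* ∪ O` and all `p_i ∈ C`. -/
def MCOP {P : Type*} (lt : P → P → Prop) (Pstar C O : Set P) (lam : P → ℝ) :
    Set (P → ℝ) :=
  {x | (∀ p ∈ Pstar, x p = lam p) ∧ (∀ p ∈ C, 0 ≤ x p) ∧
    ∀ (r : ℕ) (a b : P) (c : Fin r → P),
      a ∈ Pstar ∪ O → b ∈ Pstar ∪ O → (∀ i, c i ∈ C) →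
      lt a b → (∀ i, lt a (c i) ∧ lt (c i) b) →
      (∀ i j : Fin r, i < j → lt (c i) (c j)) →
      (∑ i, x (c i)) ≤ x a - x b}

noncomputable def yf {P : Type*} [Fintype P] [DecidableEq P] (lt : P → P → Prop)
    [DecidableRel lt] (C : Set P) [DecidablePred (· ∈ C)] (x : P → ℝ)
    (wf : WellFounded (fun a b => lt b a))
    (hne : ∀ p ∈ C, (Finset.univ.filter (fun q => lt p q)).Nonempty) : P → ℝ :=
  wf.fix (fun p rec =>
    if h : p ∈ C then
      x p + (Finset.univ.filter (fun q => lt p q)).attach.sup'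
        ((hne p h).attach) (fun q => rec q.1 (Finset.mem_filter.mp q.2).2)
    else x p)

lemma yf_eq_of_not_mem {P : Type*} [Fintype P] [DecidableEq P] (lt : P → P → Prop)
    [DecidableRel lt] (C : Set P) [DecidablePred (· ∈ C)] (x : P → ℝ)
    (wf : WellFounded (fun a b => lt b a))
    (hne : ∀ p ∈ C, (Finset.univ.filter (fun q => lt p q)).Nonempty)
    {p : P} (h : p ∉ C) : yf lt C x wf hne p = x p := by
  rw [yf, WellFounded.fix_eq, dif_neg h]

lemma yf_eq_of_mem {P : Type*} [Fintype P] [DecidableEq P] (lt : P → P → Prop)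
    [DecidableRel lt] (C : Set P) [DecidablePred (· ∈ C)] (x : P → ℝ)
    (wf : WellFounded (fun a b => lt b a))
    (hne : ∀ p ∈ C, (Finset.univ.filter (fun q => lt p q)).Nonempty)
    {p : P} (h : p ∈ C) :
    yf lt C x wf hne p = x p +
      (Finset.univ.filter (fun q => lt p q)).sup' (hne p h) (yf lt C x wf hne) := by
  conv_lhs => rw [yf, WellFounded.fix_eq, dif_pos h]
  congr 1
  refine le_antisymm (Finset.sup'_le _ _ fun q _ => ?_)
    (Finset.sup'_le _ _ fun b hb => ?_)
  · exact Finset.le_sup' (f := yf lt C x wf hne) q.2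
  · exact Finset.le_sup'_of_le _ (Finset.mem_attach _ ⟨b, hb⟩) le_rfl

/-- For an order ideal `K` of `(P*, lt)`, the marked chain-order polytope
`O_{C,O}(P, lt, ω_K)` is the convex hull of the points `1_{A(J)}`, where `J` ranges over
order ideals of `(P, lt)` with `J ∩ P* = K` and `A(J) = (J ∩ (P* ∪ O)) ∪ max_lt J`. -/
theorem stmt18 {P : Type*} [Fintype P] (lt : P → P → Prop)
    (hirr : ∀ p, ¬ lt p p) (htr : ∀ a b c, lt a b → lt b c → lt a c)
    (Pstar C O : Set P)
    (hmin : ∀ p : P, (∀ q, ¬ lt q p) → p ∈ Pstar)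
    (hmax : ∀ p : P, (∀ q, ¬ lt p q) → p ∈ Pstar)
    (hCO : C ∪ O = Pstarᶜ) (hdisj : C ∩ O = ∅)
    (K : Set P) (hK : K ∈ idealsOn lt Pstar) :
    MCOP lt Pstar C O (K.indicator 1) =
      convexHull ℝ
        {x | ∃ J : Set P, IsLowerIdeal lt J ∧ J ∩ Pstar = K ∧
          x = ind ((J ∩ (Pstar ∪ O)) ∪ maxElems lt J)} := by
  classical
  have hCP : ∀ p ∈ C, p ∉ Pstar ∪ O := by
    intro p hp hmem
    rcases hmem with h | h
    · have : p ∈ Pstarᶜ := hCO ▸ Or.inl hp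
      exact this h
    · exact Set.eq_empty_iff_forall_notMem.mp hdisj p ⟨hp, h⟩
  have hPC : ∀ p : P, p ∉ C → p ∈ Pstar ∪ O := by
    intro p hp
    by_cases hs : p ∈ Pstar
    · exact Or.inl hs
    · have : p ∈ C ∪ O := hCO ▸ hs
      rcases this with h | h
      · exact absurd h hp
      · exact Or.inr h
  apply Set.Subset.antisymm
  · intro x hx
    obtain ⟨hmark, hnn, hchain⟩ := hx
    have wfdn : WellFounded lt := by
      haveI : IsTrans P lt := ⟨htr⟩
      haveI : IsIrrefl P lt := ⟨hirr⟩
      exact Finite.wellFounded_of_trans_of_irrefl _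
    have wfup : WellFounded (fun a b : P => lt b a) := by
      haveI : IsTrans P (fun a b : P => lt b a) := ⟨fun a b c h1 h2 => htr c b a h2 h1⟩
      haveI : IsIrrefl P (fun a b : P => lt b a) := ⟨hirr⟩
      exact Finite.wellFounded_of_trans_of_irrefl _
    have hne : ∀ p ∈ C, (Finset.univ.filter (fun q => lt p q)).Nonempty := by
      intro p hp
      by_contra h
      have hq : ∀ q, ¬ lt p q := by
        intro q hq
        exact h ⟨q, Finset.mem_filter.mpr ⟨Finset.mem_univ q, hq⟩⟩
      exact hCP p hp (Or.inl (hmax p hq))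
    set y : P → ℝ := yf lt C x wfup hne with hy
    have hyN : ∀ p, p ∉ C → y p = x p := by
      intro p hp; rw [hy]; exact yf_eq_of_not_mem lt C x wfup hne hp
    have hyC : ∀ p (hp : p ∈ C), y p = x p +
        (Finset.univ.filter (fun q => lt p q)).sup' (hne p hp) y := by
      intro p hp; rw [hy]; exact yf_eq_of_mem lt C x wfup hne hp
    have step0 : ∀ a b : P, a ∈ Pstar ∪ O → b ∈ Pstar ∪ O → lt a b → x b ≤ x a := by
      intro a b ha hb hab
      have h := hchain 0 a b (fun i => i.elim0) ha hb (fun i => i.elim0) hab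
        (fun i => i.elim0) (fun i j _ => i.elim0)
      simp only [Finset.univ_eq_empty, Finset.sum_empty] at h
      linarith
    -- realization of y on C by chains
    have realize : ∀ p, p ∈ C → ∃ (r : ℕ) (c : Fin (r+1) → P) (b : P),
        c 0 = p ∧ b ∈ Pstar ∪ O ∧ (∀ i, c i ∈ C) ∧
        (∀ i j : Fin (r+1), i < j → lt (c i) (c j)) ∧ (∀ i, lt (c i) b) ∧
        y p = (∑ i, x (c i)) + x b := by
      intro p
      induction p using WellFounded.induction wfup with
      | _ p IH =>
      intro hp
      obtain ⟨q, hqmem, hqe⟩ := Finset.exists_mem_eq_sup' (hne p hp) y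
      have hpq : lt p q := (Finset.mem_filter.mp hqmem).2
      have hyp : y p = x p + y q := by rw [hyC p hp, hqe]
      by_cases hqC : q ∈ C
      · obtain ⟨r, c, b, hc0, hb, hcC, hinc, hltb, hsum⟩ := IH q hpq hqC
        have hpcj : ∀ j : Fin (r+1), lt p (c j) := by
          intro j
          rcases Fin.eq_zero_or_eq_succ j with rfl | ⟨j', rfl⟩
          · rw [hc0]; exact hpq
          · exact htr _ _ _ (hc0 ▸ hpq) (hinc 0 j'.succ (Fin.succ_pos _))
        refine ⟨r+1, Fin.cons p c, b, rfl, hb, ?_, ?_, ?_, ?_⟩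
        · intro i
          rcases Fin.eq_zero_or_eq_succ i with rfl | ⟨i', rfl⟩
          · exact hp
          · exact hcC i'
        · intro i j hij
          rcases Fin.eq_zero_or_eq_succ i with rfl | ⟨i', rfl⟩
          · rcases Fin.eq_zero_or_eq_succ j with rfl | ⟨j', rfl⟩
            · exact absurd hij (lt_irrefl _)
            · simpa only [Fin.cons_zero, Fin.cons_succ] using hpcj j'
          · rcases Fin.eq_zero_or_eq_succ j with rfl | ⟨j', rfl⟩
            · exact absurd hij (by simp [Fin.lt_iff_val_lt_val])
            · simpa only [Fin.cons_succ] using hinc i' j' (by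
                rwa [Fin.succ_lt_succ_iff] at hij)
        · intro i
          rcases Fin.eq_zero_or_eq_succ i with rfl | ⟨i', rfl⟩
          · simpa only [Fin.cons_zero] using htr _ _ _ (hc0 ▸ hpq) (hltb 0)
          · simpa only [Fin.cons_succ] using hltb i'
        · rw [Fin.sum_univ_succ]
          simp only [Fin.cons_zero, Fin.cons_succ]
          rw [hyp, hsum]; ring
      · refine ⟨0, fun _ => p, q, rfl, hPC q hqC, fun _ => hp, ?_, fun _ => hpq, ?_⟩
        · intro i j hij
          have h1 := i.isLt
          have h2 := j.isLt
          rw [Fin.lt_iff_val_lt_val] at hij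
          omega
        · rw [hyp, hyN q hqC]
          simp
    have mono_key : ∀ a ∈ Pstar ∪ O, ∀ q ∈ C, lt a q → y q ≤ x a := by
      intro a ha q hq haq
      obtain ⟨r, c, b, hc0, hb, hcC, hinc, hltb, hsum⟩ := realize q hq
      have hacj : ∀ i, lt a (c i) := by
        intro i
        rcases Fin.eq_zero_or_eq_succ i with rfl | ⟨i', rfl⟩
        · rw [hc0]; exact haq
        · exact htr _ _ _ (hc0 ▸ haq) (hinc 0 i'.succ (Fin.succ_pos _))
      have hab : lt a b := htr _ _ _ (hacj 0) (hltb 0)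
      have h := hchain (r+1) a b c ha hb hcC hab (fun i => ⟨hacj i, hltb i⟩) hinc
      linarith
    have ynn : ∀ p, 0 ≤ y p := by
      intro p
      induction p using WellFounded.induction wfup with
      | _ p IH => ?_
      by_cases hp : p ∈ C
      · obtain ⟨q, hqmem, hqe⟩ := Finset.exists_mem_eq_sup' (hne p hp) y
        have hpq : lt p q := (Finset.mem_filter.mp hqmem).2
        have hyp : y p = x p + y q := by rw [hyC p hp, hqe]
        have := IH q hpq
        have := hnn p hp
        linarith
      · rw [hyN p hp]
        rcases hPC p hp with hps | hpo
        · rw [hmark p hps]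
          exact Set.indicator_apply_nonneg (fun _ => zero_le_one)
        · have hpc : p ∈ Pstarᶜ := hCO ▸ Or.inr hpo
          obtain ⟨q, hq⟩ : ∃ q, lt p q := by
            by_contra h; push_neg at h; exact hpc (hmax p h)
          by_cases hqC : q ∈ C
          · have h1 := mono_key p (Or.inr hpo) q hqC hq
            linarith [IH q hq]
          · have h1 := step0 p q (Or.inr hpo) (hPC q hqC) hq
            have h2 := IH q hq
            rw [hyN q hqC] at h2
            linarith
    have below_star : ∀ q, q ∈ C → ∃ a, a ∈ Pstar ∪ O ∧ lt a q := by
      intro q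
      induction q using WellFounded.induction wfdn with
      | _ q IH =>
      intro hq
      obtain ⟨q', hq'⟩ : ∃ q', lt q' q := by
        by_contra h; push_neg at h
        exact hCP q hq (Or.inl (hmin q h))
      by_cases hC : q' ∈ C
      · obtain ⟨a, ha, haq⟩ := IH q' hq' hC
        exact ⟨a, ha, htr _ _ _ haq hq'⟩
      · exact ⟨q', hPC q' hC, hq'⟩
    have yle1 : ∀ p, y p ≤ 1 := by
      intro p
      induction p using WellFounded.induction wfdn with
      | _ p IH => ?_
      by_cases hp : p ∈ C
      · obtain ⟨a, ha, hap⟩ := below_star p hp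
        have h1 := mono_key a ha p hp hap
        have h2 : y a ≤ 1 := IH a hap
        rw [hyN a (fun hC => hCP a hC ha)] at h2
        linarith
      · rw [hyN p hp]
        rcases hPC p hp with hps | hpo
        · rw [hmark p hps]
          exact Set.indicator_apply_le' (fun _ => le_refl 1) (fun _ => zero_le_one)
        · have hpc : p ∈ Pstarᶜ := hCO ▸ Or.inr hpo
          obtain ⟨q, hq⟩ : ∃ q, lt q p := by
            by_contra h; push_neg at h; exact hpc (hmin p h)
          by_cases hqC : q ∈ C
          · obtain ⟨a, ha, haq⟩ := below_star q hqC
            have hap : lt a p := htr _ _ _ haq hq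
            have h1 := step0 a p ha (Or.inr hpo) hap
            have h2 : y a ≤ 1 := IH a hap
            rw [hyN a (fun hC => hCP a hC ha)] at h2
            linarith
          · have h1 := step0 q p (hPC q hqC) (Or.inr hpo) hq
            have h2 : y q ≤ 1 := IH q hq
            rw [hyN q hqC] at h2
            linarith
    have ymono : ∀ p q, lt p q → y q ≤ y p := by
      intro p q hpq
      by_cases hp : p ∈ C
      · rw [hyC p hp]
        have h1 : y q ≤ (Finset.univ.filter (fun q' => lt p q')).sup' (hne p hp) y :=
          Finset.le_sup' y (Finset.mem_filter.mpr ⟨Finset.mem_univ q, hpq⟩)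
        have h2 := hnn p hp
        linarith
      · by_cases hq : q ∈ C
        · rw [hyN p hp]; exact mono_key p (hPC p hp) q hq hpq
        · rw [hyN p hp, hyN q hq]; exact step0 p q (hPC p hp) (hPC q hq) hpq
    -- the finite value set
    set T : Finset ℝ := insert 0 (insert 1 (Finset.univ.image y)) with hT
    have hTmem : ∀ v ∈ T, 0 ≤ v ∧ v ≤ 1 := by
      intro v hv
      rw [hT] at hv
      simp only [Finset.mem_insert, Finset.mem_image, Finset.mem_univ, true_and] at hv
      rcases hv with rfl | rfl | ⟨p, rfl⟩
      · norm_num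
      · norm_num
      · exact ⟨ynn p, yle1 p⟩
    have h0T : (0:ℝ) ∈ T := Finset.mem_insert_self _ _
    have h1T : (1:ℝ) ∈ T := Finset.mem_insert_of_mem (Finset.mem_insert_self _ _)
    have hyT : ∀ p, y p ∈ T := fun p => Finset.mem_insert_of_mem
      (Finset.mem_insert_of_mem (Finset.mem_image_of_mem y (Finset.mem_univ p)))
    have hn1 : 1 ≤ T.card := Finset.card_pos.mpr ⟨0, h0T⟩
    obtain ⟨m, hmn⟩ : ∃ m, T.card = m + 1 := ⟨T.card - 1, by omega⟩
    set e : Fin T.card ≃o {v // v ∈ T} := T.orderIsoOfFin rfl with he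
    set u : ℕ → ℝ := fun j => if h : j < T.card then (e ⟨j, h⟩ : ℝ) else 1 with hu
    have humem : ∀ j, j ≤ m → u j ∈ T := by
      intro j hj
      have hjn : j < T.card := by omega
      rw [hu]
      simp only [dif_pos hjn]
      exact (e ⟨j, hjn⟩).2
    have humono : ∀ i j, i < j → j ≤ m → u i < u j := by
      intro i j hij hj
      have hjn : j < T.card := by omega
      have hin : i < T.card := by omega
      rw [hu]
      simp only [dif_pos hjn, dif_pos hin]
      exact e.strictMono (Fin.mk_lt_mk.mpr hij)
    have husurj : ∀ v ∈ T, ∃ k, k ≤ m ∧ u k = v := by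
      intro v hv
      refine ⟨(e.symm ⟨v, hv⟩ : Fin T.card).1, ?_, ?_⟩
      · have := (e.symm ⟨v, hv⟩).isLt
        omega
      · rw [hu]
        simp only [dif_pos (e.symm ⟨v, hv⟩).isLt]
        have h1 : (⟨(e.symm ⟨v, hv⟩ : Fin T.card).1, (e.symm ⟨v, hv⟩).isLt⟩ : Fin T.card)
            = e.symm ⟨v, hv⟩ := rfl
        rw [h1, OrderIso.apply_symm_apply]
    have hu0 : u 0 = 0 := by
      have h1 : 0 ≤ u 0 := (hTmem _ (humem 0 (Nat.zero_le m))).1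
      obtain ⟨k, hk, hke⟩ := husurj 0 h0T
      have h2 : u 0 ≤ 0 := by
        rcases Nat.eq_zero_or_pos k with rfl | hkpos
        · rw [hke]
        · rw [← hke]
          exact le_of_lt (humono 0 k hkpos hk)
      linarith
    have hum : u m = 1 := by
      have h1 : u m ≤ 1 := (hTmem _ (humem m le_rfl)).2
      obtain ⟨k, hk, hke⟩ := husurj 1 h1T
      have h2 : (1:ℝ) ≤ u m := by
        rcases eq_or_lt_of_le hk with rfl | hkm
        · rw [hke]
        · rw [← hke]
          exact le_of_lt (humono k m hkm le_rfl)
      linarith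
    set w : ℕ → ℝ := fun j => u (j+1) - u j with hw
    have hwnn : ∀ j, j < m → 0 ≤ w j := by
      intro j hj
      rw [hw]
      have := humono j (j+1) (by omega) (by omega)
      simp only
      linarith
    have hwsum : (∑ j ∈ Finset.range m, w j) = 1 := by
      rw [hw, Finset.sum_range_sub u m, hum, hu0]
      ring
    have tele : ∀ v ∈ T, (∑ j ∈ Finset.range m,
        if u (j+1) ≤ v then w j else 0) = v := by
      intro v hv
      obtain ⟨k, hk, hke⟩ := husurj v hv
      have hiff : ∀ j, j < m → ((u (j+1) ≤ v) ↔ (j < k)) := by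
        intro j hj
        constructor
        · intro h
          by_contra hc
          push_neg at hc
          have hlt : v < u (j+1) := by
            rw [← hke]
            exact humono k (j+1) (by omega) (by omega)
          linarith
        · intro h
          rcases eq_or_lt_of_le (show j+1 ≤ k by omega) with heq | hlt
          · rw [heq, hke]
          · rw [← hke]
            exact le_of_lt (humono (j+1) k hlt hk)
      calc (∑ j ∈ Finset.range m, if u (j+1) ≤ v then w j else 0)
          = ∑ j ∈ Finset.range m, if j < k then w j else 0 := by
            apply Finset.sum_congr rfl
            intro j hj
            rw [Finset.mem_range] at hj
            rw [if_congr (hiff j hj) rfl rfl]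
        _ = ∑ j ∈ Finset.range k, w j := by
            rw [← Finset.sum_filter]
            congr 1
            ext j
            simp only [Finset.mem_filter, Finset.mem_range]
            omega
        _ = u k - u 0 := by rw [hw, Finset.sum_range_sub u k]
        _ = v := by rw [hke, hu0]; ring
    -- the family of ideals
    set Jv : ℕ → Set P := fun j => {q | u j ≤ y q} with hJv
    have hJmem : ∀ j p, p ∈ Jv j ↔ u j ≤ y p := by
      intro j p; rw [hJv]; rfl
    have hJlow : ∀ j, IsLowerIdeal lt (Jv j) := by
      intro j p q hpq hq
      rw [hJmem] at *
      exact le_trans ((hJmem j q).mp hq) (ymono p q hpq)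
    have hJK : ∀ j, 1 ≤ j → j ≤ m → Jv j ∩ Pstar = K := by
      intro j hj1 hjm
      have hupos : 0 < u j := by
        rw [← hu0]
        exact humono 0 j (by omega) hjm
      have hule : u j ≤ 1 := (hTmem _ (humem j hjm)).2
      ext p
      simp only [Set.mem_inter_iff, hJmem, Set.mem_setOf_eq]
      constructor
      · rintro ⟨hyp, hps⟩
        have hpnC : p ∉ C := fun hC => hCP p hC (Or.inl hps)
        have hxp : y p = K.indicator 1 p := by
          rw [hyN p hpnC]; exact hmark p hps
        by_contra hpK
        rw [hxp, Set.indicator_of_notMem hpK] at hyp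
        linarith
      · intro hpK
        have hps : p ∈ Pstar := hK.1 hpK
        have hpnC : p ∉ C := fun hC => hCP p hC (Or.inl hps)
        refine ⟨?_, hps⟩
        rw [hyN p hpnC, hmark p hps, Set.indicator_of_mem hpK, Pi.one_apply]
        exact hule
    have hindval : ∀ (A : Set P) (p : P), ind A p = if p ∈ A then 1 else 0 := by
      intro A p; simp [ind, Set.indicator_apply]
    -- key coordinate identity
    have key : ∀ p, (∑ j ∈ Finset.range m,
        w j * ind ((Jv (j+1) ∩ (Pstar ∪ O)) ∪ maxElems lt (Jv (j+1))) p) = x p := by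
      intro p
      by_cases hp : p ∈ C
      · obtain ⟨qm, hqmmem, hqme⟩ := Finset.exists_mem_eq_sup' (hne p hp) y
        have hpqm : lt p qm := (Finset.mem_filter.mp hqmmem).2
        have hM : y p = x p + y qm := by rw [hyC p hp, hqme]
        have hMle : ∀ q, lt p q → y q ≤ y qm := by
          intro q hq
          rw [← hqme]
          exact Finset.le_sup' y (Finset.mem_filter.mpr ⟨Finset.mem_univ q, hq⟩)
        have hiffmax : ∀ j, (p ∈ maxElems lt (Jv j) ↔ (u j ≤ y p ∧ ¬ (u j ≤ y qm))) := by
          intro j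
          constructor
          · rintro ⟨h1, h2⟩
            exact ⟨(hJmem j p).mp h1, fun hle => h2 qm ((hJmem j qm).mpr hle) hpqm⟩
          · rintro ⟨h1, h2⟩
            exact ⟨(hJmem j p).mpr h1,
              fun q hq hpq => h2 (le_trans ((hJmem j q).mp hq) (hMle q hpq))⟩
        have hpA : ∀ j, (p ∈ (Jv j ∩ (Pstar ∪ O)) ∪ maxElems lt (Jv j)) ↔
            p ∈ maxElems lt (Jv j) := by
          intro j
          constructor
          · rintro (⟨_, hmem⟩ | h)
            · exact absurd hmem (hCP p hp)
            · exact h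
          · exact Or.inr
        have hMyp : y qm ≤ y p := by
          rw [hM]
          linarith [hnn p hp]
        calc (∑ j ∈ Finset.range m,
            w j * ind ((Jv (j+1) ∩ (Pstar ∪ O)) ∪ maxElems lt (Jv (j+1))) p)
            = ∑ j ∈ Finset.range m, ((if u (j+1) ≤ y p then w j else 0)
                - (if u (j+1) ≤ y qm then w j else 0)) := by
              apply Finset.sum_congr rfl
              intro j hj
              rw [hindval]
              by_cases h1 : u (j+1) ≤ y p <;> by_cases h2 : u (j+1) ≤ y qm
              · rw [if_neg (fun hmem => ((hiffmax (j+1)).mp ((hpA (j+1)).mp hmem)).2 h2),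
                  if_pos h1, if_pos h2]
                ring
              · rw [if_pos ((hpA (j+1)).mpr ((hiffmax (j+1)).mpr ⟨h1, h2⟩)),
                  if_pos h1, if_neg h2]
                ring
              · exact absurd (le_trans h2 hMyp) h1
              · rw [if_neg (fun hmem => h1 ((hiffmax (j+1)).mp ((hpA (j+1)).mp hmem)).1),
                  if_neg h1, if_neg h2]
                ring
          _ = (∑ j ∈ Finset.range m, if u (j+1) ≤ y p then w j else 0)
              - (∑ j ∈ Finset.range m, if u (j+1) ≤ y qm then w j else 0) :=
              Finset.sum_sub_distrib _ _
          _ = y p - y qm := by rw [tele (y p) (hyT p), tele (y qm) (hyT qm)]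
          _ = x p := by rw [hM]; ring
      · have hps : p ∈ Pstar ∪ O := hPC p hp
        have hpA : ∀ j, (p ∈ (Jv j ∩ (Pstar ∪ O)) ∪ maxElems lt (Jv j)) ↔ u j ≤ y p := by
          intro j
          constructor
          · rintro (⟨h, _⟩ | h)
            · exact (hJmem j p).mp h
            · exact (hJmem j p).mp h.1
          · intro h
            exact Or.inl ⟨(hJmem j p).mpr h, hps⟩
        calc (∑ j ∈ Finset.range m,
            w j * ind ((Jv (j+1) ∩ (Pstar ∪ O)) ∪ maxElems lt (Jv (j+1))) p)
            = ∑ j ∈ Finset.range m, if u (j+1) ≤ y p then w j else 0 := by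
              apply Finset.sum_congr rfl
              intro j hj
              rw [hindval]
              by_cases h : u (j+1) ≤ y p
              · rw [if_pos ((hpA (j+1)).mpr h), if_pos h, mul_one]
              · rw [if_neg (fun hmem => h ((hpA (j+1)).mp hmem)), if_neg h, mul_zero]
          _ = y p := tele (y p) (hyT p)
          _ = x p := hyN p hp
    -- assemble the convex combination
    have hxsum : x = ∑ j ∈ Finset.range m,
        w j • ind ((Jv (j+1) ∩ (Pstar ∪ O)) ∪ maxElems lt (Jv (j+1))) := by
      funext p
      rw [Finset.sum_apply]
      simp only [Pi.smul_apply, smul_eq_mul]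
      exact (key p).symm
    rw [hxsum, ← Finset.centerMass_eq_of_sum_1 _
      (fun j => ind ((Jv (j+1) ∩ (Pstar ∪ O)) ∪ maxElems lt (Jv (j+1)))) hwsum]
    refine Finset.centerMass_mem_convexHull _
      (fun j hj => hwnn j (Finset.mem_range.mp hj)) (by rw [hwsum]; norm_num) ?_
    intro j hj
    rw [Finset.mem_range] at hj
    exact ⟨Jv (j+1), hJlow (j+1), hJK (j+1) (by omega) (by omega), rfl⟩
  · -- convex hull of vertices ⊆ MCOP
    apply convexHull_min
    · rintro x ⟨J, hJ, hJK, rfl⟩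
      set A : Set P := (J ∩ (Pstar ∪ O)) ∪ maxElems lt J with hAdef
      have hind : ∀ p, ind A p = if p ∈ A then 1 else 0 := by
        intro p; simp [ind, Set.indicator_apply]
      have hAiff : ∀ p ∈ Pstar ∪ O, (p ∈ A ↔ p ∈ J) := by
        intro p hp
        constructor
        · rintro (⟨h, _⟩ | h)
          · exact h
          · exact h.1
        · intro h; exact Or.inl ⟨h, hp⟩
      refine ⟨?_, ?_, ?_⟩
      · intro p hp
        have h1 : p ∈ A ↔ p ∈ K := by
          rw [hAiff p (Or.inl hp), ← hJK]
          constructor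
          · intro h; exact ⟨h, hp⟩
          · intro h; exact h.1
        rw [hind]
        by_cases h : p ∈ K
        · rw [if_pos (h1.mpr h), Set.indicator_of_mem h]; rfl
        · rw [if_neg (fun hh => h (h1.mp hh)), Set.indicator_of_notMem h]
      · intro p _
        rw [hind]
        split <;> norm_num
      · intro r a b c ha hb hc hab hcab hmono
        -- each c i in A iff in maxElems
        have hcA : ∀ i, c i ∈ A ↔ c i ∈ maxElems lt J := by
          intro i
          constructor
          · rintro (⟨_, h⟩ | h)
            · exact absurd h (hCP _ (hc i))
            · exact h
          · exact Or.inr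
        have hbA : ind A b ≤ ind A a := by
          rw [hind, hind]
          by_cases hbJ : b ∈ A
          · have : a ∈ J := hJ hab ((hAiff b hb).mp hbJ)
            rw [if_pos hbJ, if_pos ((hAiff a ha).mpr this)]
          · rw [if_neg hbJ]; split <;> norm_num
        by_cases hex : ∃ i, c i ∈ A
        · obtain ⟨i₀, hi₀⟩ := hex
          have hi₀m : c i₀ ∈ maxElems lt J := (hcA i₀).mp hi₀
          have huniq : ∀ i, i ≠ i₀ → ind A (c i) = 0 := by
            intro i hi
            rw [hind, if_neg]
            intro hmem
            have him : c i ∈ maxElems lt J := (hcA i).mp hmem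
            rcases lt_trichotomy i i₀ with h | h | h
            · exact him.2 (c i₀) hi₀m.1 (hmono i i₀ h)
            · exact hi h
            · exact hi₀m.2 (c i) him.1 (hmono i₀ i h)
          have hsum : (∑ i, ind A (c i)) = 1 := by
            rw [Finset.sum_eq_single_of_mem i₀ (Finset.mem_univ i₀)
              (fun i _ hi => huniq i hi)]
            rw [hind, if_pos hi₀]
          have haA : ind A a = 1 := by
            have : a ∈ J := hJ (hcab i₀).1 hi₀m.1
            rw [hind, if_pos ((hAiff a ha).mpr this)]
          have hbA0 : ind A b = 0 := by
            rw [hind, if_neg]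
            intro hmem
            exact hi₀m.2 b ((hAiff b hb).mp hmem) (hcab i₀).2
          rw [hsum, haA, hbA0]; norm_num
        · have hsum : (∑ i, ind A (c i)) = 0 := by
            apply Finset.sum_eq_zero
            intro i _
            rw [hind, if_neg (fun h => hex ⟨i, h⟩)]
          rw [hsum]
          linarith
    · -- convexity of MCOP
      intro u hu v hv s t hs ht hst
      refine ⟨?_, ?_, ?_⟩
      · intro p hp
        simp only [Pi.add_apply, Pi.smul_apply, smul_eq_mul, hu.1 p hp, hv.1 p hp]
        rw [← add_mul, hst, one_mul]
      · intro p hp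
        simp only [Pi.add_apply, Pi.smul_apply, smul_eq_mul]
        exact add_nonneg (mul_nonneg hs (hu.2.1 p hp)) (mul_nonneg ht (hv.2.1 p hp))
      · intro r a b c ha hb hc hab hcab hmono
        have H1 := hu.2.2 r a b c ha hb hc hab hcab hmono
        have H2 := hv.2.2 r a b c ha hb hc hab hcab hmono
        simp only [Pi.add_apply, Pi.smul_apply, smul_eq_mul]
        calc (∑ i, (s * u (c i) + t * v (c i)))
            = s * (∑ i, u (c i)) + t * (∑ i, v (c i)) := by
              rw [Finset.sum_add_distrib, Finset.mul_sum, Finset.mul_sum]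
          _ ≤ s * (u a - u b) + t * (v a - v b) :=
              add_le_add (mul_le_mul_of_nonneg_left H1 hs)
                (mul_le_mul_of_nonneg_left H2 ht)
          _ = s * u a + t * v a - (s * u b + t * v b) := by ring
end

section
/- Let (P,<) be a finite poset, P* ⊆ P a subset containing all minimal and all maximal elements of (P,<), P∖P* = C ⊔ O a partition, and λ ∈ ℤ^{P*} a nonnegative dominant marking with decomposition coefficients α_K(λ). Define <' on P by: p <' q iff p < q and p ∉ P* ∪ O. Then the marked chain-order polytope O_{C,O}(P,<,λ) equals the Minkowski sum Σ_{K∈𝒥*} α_K(λ)·R_{ω_K}(P,<,<'), where for each order ideal K of (P*,<), R_{ω_K}(P,<,<') is the convex hull of the points 1_{max_{<'} J} over order ideals J of (P,<) with J ∩ P* = K. -/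
open Pointwise

noncomputable def ups {P : Type*} [Fintype P] (lt : P → P → Prop) (p : P) : Finset P :=
  (Set.toFinite {q | lt p q}).toFinset

lemma mem_ups {P : Type*} [Fintype P] {lt : P → P → Prop} {p q : P} :
    q ∈ ups lt p ↔ lt p q := by simp [ups]

open Classical in
noncomputable def Wf {P : Type*} [Fintype P] (lt : P → P → Prop) (C : Set P) (x : P → ℝ)
    (wf : WellFounded (fun a b : P => lt b a)) : P → ℝ :=
  wf.fix (fun p IH => x p +
    (if p ∈ C then
      ((ups lt p).attach.fold max 0 (fun q => IH q.1 (mem_ups.mp q.2))) else 0))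

noncomputable def Uf {P : Type*} [Fintype P] (lt : P → P → Prop) (C : Set P) (x : P → ℝ)
    (wf : WellFounded (fun a b : P => lt b a)) (p : P) : ℝ :=
  (ups lt p).fold max 0 (Wf lt C x wf)

lemma Wf_of_mem {P : Type*} [Fintype P] (lt : P → P → Prop) (C : Set P) (x : P → ℝ)
    (wf : WellFounded (fun a b : P => lt b a)) {p : P} (hp : p ∈ C) :
    Wf lt C x wf p = x p + Uf lt C x wf p := by
  rw [Wf, WellFounded.fix_eq, if_pos hp]
  congr 1
  rw [Uf]
  conv_rhs => rw [← Finset.attach_map_val (s := ups lt p), Finset.fold_map]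
  rfl

lemma Wf_of_not_mem {P : Type*} [Fintype P] (lt : P → P → Prop) (C : Set P) (x : P → ℝ)
    (wf : WellFounded (fun a b : P => lt b a)) {p : P} (hp : p ∉ C) :
    Wf lt C x wf p = x p := by
  rw [Wf, WellFounded.fix_eq, if_neg hp, add_zero]

lemma le_Uf {P : Type*} [Fintype P] (lt : P → P → Prop) (C : Set P) (x : P → ℝ)
    (wf : WellFounded (fun a b : P => lt b a)) {p q : P} (h : lt p q) :
    Wf lt C x wf q ≤ Uf lt C x wf p :=
  (Finset.le_fold_max _).mpr (Or.inr ⟨q, mem_ups.mpr h, le_rfl⟩)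

lemma Uf_nonneg {P : Type*} [Fintype P] (lt : P → P → Prop) (C : Set P) (x : P → ℝ)
    (wf : WellFounded (fun a b : P => lt b a)) (p : P) :
    0 ≤ Uf lt C x wf p :=
  (Finset.le_fold_max _).mpr (Or.inl le_rfl)

lemma Uf_le {P : Type*} [Fintype P] (lt : P → P → Prop) (C : Set P) (x : P → ℝ)
    (wf : WellFounded (fun a b : P => lt b a)) {p : P} {t : ℝ} (ht : 0 ≤ t)
    (h : ∀ q, lt p q → Wf lt C x wf q ≤ t) : Uf lt C x wf p ≤ t :=
  (Finset.fold_max_le _).mpr ⟨ht, fun q hq => h q (mem_ups.mp hq)⟩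

lemma fold_max_attain {α : Type*} (s : Finset α) (f : α → ℝ) :
    s.fold max 0 f = 0 ∨ ∃ a ∈ s, s.fold max 0 f = f a := by
  classical
  induction s using Finset.induction_on with
  | empty => simp
  | @insert a s ha ih =>
    rw [Finset.fold_insert ha]
    rcases max_choice (f a) (s.fold max 0 f) with h | h
    · exact Or.inr ⟨a, Finset.mem_insert_self _ _, h⟩
    · rw [h]
      rcases ih with h' | ⟨b, hb, h'⟩
      · exact Or.inl h'
      · exact Or.inr ⟨b, Finset.mem_insert_of_mem hb, h'⟩

lemma Uf_attain {P : Type*} [Fintype P] (lt : P → P → Prop) (C : Set P) (x : P → ℝ)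
    (wf : WellFounded (fun a b : P => lt b a)) (p : P) :
    Uf lt C x wf p = 0 ∨ ∃ q, lt p q ∧ Uf lt C x wf p = Wf lt C x wf q := by
  rcases fold_max_attain (ups lt p) (Wf lt C x wf) with h | ⟨q, hq, h⟩
  · exact Or.inl h
  · exact Or.inr ⟨q, mem_ups.mp hq, h⟩

section AuxMCOP

variable {P : Type*}

lemma MCOP_congr {lt : P → P → Prop} {Pstar C O : Set P} {l1 l2 : P → ℝ}
    (h : ∀ p ∈ Pstar, l1 p = l2 p) :
    MCOP lt Pstar C O l1 = MCOP lt Pstar C O l2 := by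
  unfold MCOP
  ext x
  simp only [Set.mem_setOf_eq]
  constructor <;> rintro ⟨h1, h2, h3⟩
  · exact ⟨fun p hp => by rw [h1 p hp, h p hp], h2, h3⟩
  · exact ⟨fun p hp => by rw [h1 p hp, h p hp], h2, h3⟩

lemma MCOP_add {lt : P → P → Prop} {Pstar C O : Set P} {l1 l2 : P → ℝ} {x y : P → ℝ}
    (hx : x ∈ MCOP lt Pstar C O l1) (hy : y ∈ MCOP lt Pstar C O l2) :
    x + y ∈ MCOP lt Pstar C O (l1 + l2) := by
  obtain ⟨hx1, hx2, hx3⟩ := hx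
  obtain ⟨hy1, hy2, hy3⟩ := hy
  refine ⟨fun p hp => by simp [hx1 p hp, hy1 p hp], fun p hp => ?_, ?_⟩
  · have := hx2 p hp; have := hy2 p hp
    simp only [Pi.add_apply]; linarith
  · intro r a b c ha hb hc hab hcs hmono
    have h1 := hx3 r a b c ha hb hc hab hcs hmono
    have h2 := hy3 r a b c ha hb hc hab hcs hmono
    simp only [Pi.add_apply, Finset.sum_add_distrib]
    linarith

lemma MCOP_smul {lt : P → P → Prop} {Pstar C O : Set P} {l : P → ℝ} {x : P → ℝ}
    {m : ℝ} (hm : 0 ≤ m) (hx : x ∈ MCOP lt Pstar C O l) :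
    m • x ∈ MCOP lt Pstar C O (fun p => m * l p) := by
  obtain ⟨hx1, hx2, hx3⟩ := hx
  refine ⟨fun p hp => by simp [hx1 p hp], fun p hp => ?_, ?_⟩
  · have := hx2 p hp
    simp only [Pi.smul_apply, smul_eq_mul]
    positivity
  · intro r a b c ha hb hc hab hcs hmono
    have h1 := hx3 r a b c ha hb hc hab hcs hmono
    simp only [Pi.smul_apply, smul_eq_mul, ← Finset.mul_sum]
    nlinarith

lemma MCOP_convex {lt : P → P → Prop} {Pstar C O : Set P} {l : P → ℝ} :
    Convex ℝ (MCOP lt Pstar C O l) := by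
  intro x hx y hy a b ha hb hab
  have h := MCOP_add (MCOP_smul ha hx) (MCOP_smul hb hy)
  have : MCOP lt Pstar C O ((fun p => a * l p) + fun p => b * l p) = MCOP lt Pstar C O l := by
    apply MCOP_congr
    intro p _
    simp only [Pi.add_apply]
    rw [← add_mul, hab, one_mul]
  rwa [this] at h

lemma mem_C_not_PO {Pstar C O : Set P} (hCO : C ∪ O = Pstarᶜ) (hdisj : C ∩ O = ∅)
    {p : P} (hp : p ∈ C) : p ∉ Pstar ∪ O := by
  intro hmem
  rcases hmem with h | h
  · have : p ∈ Pstarᶜ := hCO ▸ Or.inl hp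
    exact this h
  · have h2 : p ∈ C ∩ O := ⟨hp, h⟩
    rw [hdisj] at h2
    exact h2

lemma mem_maxElems {r : P → P → Prop} {J : Set P} {p : P} :
    p ∈ maxElems r J ↔ p ∈ J ∧ ∀ q ∈ J, ¬ r p q := Iff.rfl

lemma maxElems_mem_iff_PO {lt lt' : P → P → Prop} {Pstar O J : Set P}
    (hlt' : ∀ p q, lt' p q ↔ (lt p q ∧ p ∉ Pstar ∪ O)) {p : P} (hp : p ∈ Pstar ∪ O) :
    p ∈ maxElems lt' J ↔ p ∈ J := by
  rw [mem_maxElems]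
  constructor
  · exact fun h => h.1
  · intro h
    exact ⟨h, fun q _ hq => ((hlt' p q).mp hq).2 hp⟩

lemma vertex_mem_MCOP {lt : P → P → Prop}
    (htr : ∀ a b c, lt a b → lt b c → lt a c)
    {Pstar C O : Set P} (hCO : C ∪ O = Pstarᶜ) (hdisj : C ∩ O = ∅)
    (lt' : P → P → Prop) (hlt' : ∀ p q, lt' p q ↔ (lt p q ∧ p ∉ Pstar ∪ O))
    {J K : Set P} (hJ : IsLowerIdeal lt J) (hJK : J ∩ Pstar = K) :
    ind (maxElems lt' J) ∈ MCOP lt Pstar C O (fun p => K.indicator 1 p) := by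
  classical
  have hCPO : ∀ p ∈ C, p ∉ Pstar ∪ O := fun p hp => mem_C_not_PO hCO hdisj hp
  have hindval : ∀ (A : Set P) (p : P), ind A p = if p ∈ A then 1 else 0 := by
    intro A p; simp [ind, Set.indicator_apply]
  refine ⟨?_, ?_, ?_⟩
  · intro p hp
    rw [hindval]
    by_cases hpJ : p ∈ J
    · rw [if_pos ((maxElems_mem_iff_PO hlt' (Or.inl hp)).mpr hpJ)]
      have hK : p ∈ K := hJK ▸ (⟨hpJ, hp⟩ : p ∈ J ∩ Pstar)
      simp [Set.indicator_of_mem hK]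
    · rw [if_neg (fun h => hpJ ((mem_maxElems.mp h).1))]
      have hK : p ∉ K := fun h => hpJ ((hJK ▸ h : p ∈ J ∩ Pstar)).1
      simp [Set.indicator_of_notMem hK]
  · intro p _
    rw [hindval]
    split <;> norm_num
  · intro r a b c ha hb hc hab hcs hmono
    by_cases hex : ∃ i, c i ∈ maxElems lt' J
    · obtain ⟨i0, hi0⟩ := hex
      have honly : ∀ i, ind (maxElems lt' J) (c i) = if i = i0 then 1 else 0 := by
        intro i
        rw [hindval]
        by_cases hii : i = i0
        · subst hii
          rw [if_pos hi0, if_pos rfl]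
        · rw [if_neg ?_, if_neg hii]
          intro hmem
          rcases lt_or_gt_of_ne (fun h : i = i0 => hii h) with hlt | hgt
          · exact (mem_maxElems.mp hmem).2 (c i0) ((mem_maxElems.mp hi0).1)
              ((hlt' _ _).mpr ⟨hmono i i0 hlt, hCPO _ (hc i)⟩)
          · exact (mem_maxElems.mp hi0).2 (c i) ((mem_maxElems.mp hmem).1)
              ((hlt' _ _).mpr ⟨hmono i0 i hgt, hCPO _ (hc i0)⟩)
      have hsum : (∑ i, ind (maxElems lt' J) (c i)) = 1 := by
        rw [Finset.sum_congr rfl (fun i _ => honly i)]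
        simp
      have haJ : a ∈ J := hJ (hcs i0).1 ((mem_maxElems.mp hi0).1)
      have hbJ : b ∉ J := fun hbJ =>
        (mem_maxElems.mp hi0).2 b hbJ ((hlt' _ _).mpr ⟨(hcs i0).2, hCPO _ (hc i0)⟩)
      have hva : ind (maxElems lt' J) a = 1 := by
        rw [hindval, if_pos ((maxElems_mem_iff_PO hlt' ha).mpr haJ)]
      have hvb : ind (maxElems lt' J) b = 0 := by
        rw [hindval, if_neg (fun h => hbJ ((mem_maxElems.mp h).1))]
      rw [hsum, hva, hvb]; norm_num
    · push_neg at hex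
      have hsum : (∑ i, ind (maxElems lt' J) (c i)) = 0 := by
        apply Finset.sum_eq_zero
        intro i _
        rw [hindval, if_neg (hex i)]
      rw [hsum, sub_nonneg]
      by_cases hbm : b ∈ maxElems lt' J
      · have haJ : a ∈ J := hJ hab ((mem_maxElems.mp hbm).1)
        rw [hindval, hindval, if_pos ((maxElems_mem_iff_PO hlt' ha).mpr haJ), if_pos hbm]
      · rw [hindval, hindval, if_neg hbm]
        split <;> norm_num

lemma RPPfund_subset_MCOP {lt : P → P → Prop}
    (htr : ∀ a b c, lt a b → lt b c → lt a c)
    {Pstar C O : Set P} (hCO : C ∪ O = Pstarᶜ) (hdisj : C ∩ O = ∅)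
    (lt' : P → P → Prop) (hlt' : ∀ p q, lt' p q ↔ (lt p q ∧ p ∉ Pstar ∪ O))
    (K : Set P) :
    RPPfund lt lt' Pstar K ⊆ MCOP lt Pstar C O (fun p => K.indicator 1 p) := by
  apply convexHull_min ?_ MCOP_convex
  rintro x ⟨J, hJ, hJK, rfl⟩
  exact vertex_mem_MCOP htr hCO hdisj lt' hlt' hJ hJK

lemma zero_mem_MCOP {lt : P → P → Prop} {Pstar C O : Set P} :
    (0 : P → ℝ) ∈ MCOP lt Pstar C O (fun _ => 0) := by
  refine ⟨fun p _ => rfl, fun p _ => le_rfl, ?_⟩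
  intro r a b c _ _ _ _ _ _
  simp

lemma sum_dilate_subset_MCOP {lt : P → P → Prop} [Fintype P]
    (htr : ∀ a b c, lt a b → lt b c → lt a c)
    {Pstar C O : Set P} (hCO : C ∪ O = Pstarᶜ) (hdisj : C ∩ O = ∅)
    (lt' : P → P → Prop) (hlt' : ∀ p q, lt' p q ↔ (lt p q ∧ p ∉ Pstar ∪ O))
    (α : Set P → ℕ) (s : Finset (Set P)) :
    (∑ K ∈ s, dilate (α K) (RPPfund lt lt' Pstar K)) ⊆
      MCOP lt Pstar C O (fun p => ∑ K ∈ s, (α K : ℝ) * K.indicator 1 p) := by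
  classical
  induction s using Finset.induction_on with
  | empty =>
    intro z hz
    rw [Finset.sum_empty] at hz
    rw [Set.mem_zero] at hz
    subst hz
    have h0 := zero_mem_MCOP (lt := lt) (Pstar := Pstar) (C := C) (O := O)
    have : MCOP lt Pstar C O (fun _ => (0:ℝ)) =
        MCOP lt Pstar C O (fun p => ∑ K ∈ (∅ : Finset (Set P)), (α K : ℝ) * K.indicator 1 p) := by
      apply MCOP_congr; intro p _; simp
    rwa [this] at h0
  | @insert K s hK ih =>
    intro z hz
    rw [Finset.sum_insert hK] at hz
    rw [Set.mem_add] at hz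
    obtain ⟨u, hu, v, hv, rfl⟩ := hz
    obtain ⟨w, hw, rfl⟩ := hu
    have hu' : (α K : ℝ) • w ∈ MCOP lt Pstar C O (fun p => (α K : ℝ) * K.indicator 1 p) :=
      MCOP_smul (by positivity) (RPPfund_subset_MCOP htr hCO hdisj lt' hlt' K hw)
    have hv' := ih hv
    have h := MCOP_add hu' hv'
    have heq : MCOP lt Pstar C O
        ((fun p => (α K : ℝ) * K.indicator 1 p) + fun p => ∑ K' ∈ s, (α K' : ℝ) * K'.indicator 1 p)
        = MCOP lt Pstar C O (fun p => ∑ K' ∈ insert K s, (α K' : ℝ) * K'.indicator 1 p) := by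
      apply MCOP_congr
      intro p _
      rw [Finset.sum_insert hK]
      rfl
    rwa [heq] at h

end AuxMCOP


section AuxGeneric

lemma exists_top {P : Type*} (lt : P → P → Prop)
    (htr : ∀ a b c, lt a b → lt b c → lt a c)
    (wf : WellFounded (fun a b : P => lt b a)) (p : P) :
    ∃ M, (M = p ∨ lt p M) ∧ ∀ q, ¬ lt M q := by
  refine wf.induction (C := fun p => ∃ M, (M = p ∨ lt p M) ∧ ∀ q, ¬ lt M q) p ?_
  intro p IH
  by_cases h : ∃ q, lt p q
  · obtain ⟨q, hq⟩ := h
    obtain ⟨M, hM1, hM2⟩ := IH q hq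
    refine ⟨M, Or.inr ?_, hM2⟩
    rcases hM1 with rfl | h2
    · exact hq
    · exact htr _ _ _ hq h2
  · push_neg at h
    exact ⟨p, Or.inl rfl, h⟩

lemma exists_bot {P : Type*} (lt : P → P → Prop)
    (htr : ∀ a b c, lt a b → lt b c → lt a c)
    (wf : WellFounded lt) (p : P) :
    ∃ M, (M = p ∨ lt M p) ∧ ∀ q, ¬ lt q M := by
  refine wf.induction (C := fun p => ∃ M, (M = p ∨ lt M p) ∧ ∀ q, ¬ lt q M) p ?_
  intro p IH
  by_cases h : ∃ q, lt q p
  · obtain ⟨q, hq⟩ := h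
    obtain ⟨M, hM1, hM2⟩ := IH q hq
    refine ⟨M, Or.inr ?_, hM2⟩
    rcases hM1 with rfl | h2
    · exact hq
    · exact htr _ _ _ h2 hq
  · push_neg at h
    exact ⟨p, Or.inl rfl, h⟩

lemma chain_top {γ : Type*} (r : γ → γ → Prop) (hrefl : ∀ a, r a a)
    (htrans : ∀ a b c, r a b → r b c → r a c) (s : Finset γ) :
    (∀ a ∈ s, ∀ b ∈ s, r a b ∨ r b a) → s.Nonempty → ∃ M ∈ s, ∀ a ∈ s, r a M := by
  classical
  induction s using Finset.induction_on with
  | empty => intro _ h; simp at h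
  | @insert a s ha ih =>
    intro hc _
    by_cases hs : s.Nonempty
    · obtain ⟨M, hM, hMax⟩ := ih
        (fun u hu v hv => hc u (Finset.mem_insert_of_mem hu) v (Finset.mem_insert_of_mem hv)) hs
      rcases hc a (Finset.mem_insert_self a s) M (Finset.mem_insert_of_mem hM) with h | h
      · refine ⟨M, Finset.mem_insert_of_mem hM, ?_⟩
        intro K hK
        rcases Finset.mem_insert.mp hK with rfl | hK'
        · exact h
        · exact hMax K hK'
      · refine ⟨a, Finset.mem_insert_self a s, ?_⟩
        intro K hK
        rcases Finset.mem_insert.mp hK with rfl | hK'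
        · exact hrefl K
        · exact htrans _ _ _ (hMax K hK') h
    · rw [Finset.not_nonempty_iff_eq_empty] at hs
      subst hs
      refine ⟨a, Finset.mem_insert_self a ∅, ?_⟩
      intro K hK
      rcases Finset.mem_insert.mp hK with rfl | hK'
      · exact hrefl K
      · simp at hK'

lemma mem_finset_sum_sets {ι γ : Type*} [AddCommMonoid γ] (s : Finset ι) (f : ι → γ)
    (F : ι → Set γ) : (∀ i ∈ s, f i ∈ F i) → (∑ i ∈ s, f i) ∈ ∑ i ∈ s, F i := by
  classical
  induction s using Finset.induction_on with
  | empty => intro _; simp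
  | @insert a s ha ih =>
    intro h
    rw [Finset.sum_insert ha, Finset.sum_insert ha]
    exact Set.add_mem_add (h a (Finset.mem_insert_self a s))
      (ih fun i hi => h i (Finset.mem_insert_of_mem hi))

lemma RPPfund_nonempty {P : Type*} {lt : P → P → Prop}
    (htr : ∀ a b c, lt a b → lt b c → lt a c)
    (lt' : P → P → Prop) {Pstar : Set P} {K : Set P} (hK : K ∈ idealsOn lt Pstar) :
    (RPPfund lt lt' Pstar K).Nonempty := by
  set J0 : Set P := {p | ∃ q ∈ K, p = q ∨ lt p q} with hJ0
  have hideal : IsLowerIdeal lt J0 := by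
    intro p q hpq hq
    obtain ⟨s, hs, h⟩ := hq
    refine ⟨s, hs, Or.inr ?_⟩
    rcases h with rfl | h
    · exact hpq
    · exact htr _ _ _ hpq h
  have hinter : J0 ∩ Pstar = K := by
    ext p
    constructor
    · rintro ⟨⟨s, hs, h⟩, hp⟩
      rcases h with rfl | h
      · exact hs
      · exact hK.2 p s hp (hK.1 hs) h hs
    · intro hp
      exact ⟨⟨p, hp, Or.inl rfl⟩, hK.1 hp⟩
  exact ⟨ind (maxElems lt' J0), subset_convexHull ℝ _ ⟨J0, hideal, hinter, rfl⟩⟩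

noncomputable def svf (T : Finset ℝ) (j : ℕ) : ℝ := (T.sort (·≤·)).getD j 0

lemma svf_lt_svf (T : Finset ℝ) {i j : ℕ} (hij : i < j) (hj : j < (T.sort (·≤·)).length) :
    svf T i < svf T j := by
  have hs := Finset.sortedLT_sort T
  have hi : i < (T.sort (·≤·)).length := lt_trans hij hj
  rw [svf, svf, List.getD_eq_getElem _ _ hi, List.getD_eq_getElem _ _ hj]
  exact hs.strictMono_get (show (⟨i, hi⟩ : Fin _) < ⟨j, hj⟩ from hij)

lemma svf_le_svf (T : Finset ℝ) {i j : ℕ} (hij : i ≤ j) (hj : j < (T.sort (·≤·)).length) :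
    svf T i ≤ svf T j := by
  rcases eq_or_lt_of_le hij with rfl | h
  · exact le_rfl
  · exact le_of_lt (svf_lt_svf T h hj)

lemma svf_mem (T : Finset ℝ) {j : ℕ} (hj : j < (T.sort (·≤·)).length) : svf T j ∈ T := by
  rw [svf, List.getD_eq_getElem _ _ hj]
  exact (Finset.mem_sort (α := ℝ) (·≤·)).mp (List.getElem_mem hj)

lemma mem_svf (T : Finset ℝ) {t : ℝ} (ht : t ∈ T) :
    ∃ j, ∃ _ : j < (T.sort (·≤·)).length, svf T j = t := by
  have h : t ∈ T.sort (·≤·) := (Finset.mem_sort (α := ℝ) (·≤·)).mpr ht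
  obtain ⟨⟨j, hj⟩, hget⟩ := List.mem_iff_get.mp h
  refine ⟨j, hj, ?_⟩
  rw [svf, List.getD_eq_getElem _ _ hj]
  exact hget

lemma sorted_tele (T : Finset ℝ) {a b : ℝ} (ha : a ∈ T) (hb : b ∈ T) (hab : a ≤ b) :
    ∑ j ∈ (Finset.range ((T.sort (·≤·)).length - 1)).filter
      (fun j => a ≤ svf T j ∧ svf T j < b), (svf T (j+1) - svf T j) = b - a := by
  classical
  obtain ⟨ja, hja, haeq⟩ := mem_svf T ha
  obtain ⟨jb, hjb, hbeq⟩ := mem_svf T hb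
  have hjab : ja ≤ jb := by
    by_contra h
    push_neg at h
    have := svf_lt_svf T h hja
    rw [haeq, hbeq] at this
    linarith
  have hfil : (Finset.range ((T.sort (·≤·)).length - 1)).filter
      (fun j => a ≤ svf T j ∧ svf T j < b) = Finset.Ico ja jb := by
    ext j
    simp only [Finset.mem_filter, Finset.mem_range, Finset.mem_Ico]
    constructor
    · rintro ⟨hjr, h1, h2⟩
      have hjn : j < (T.sort (·≤·)).length := by omega
      constructor
      · by_contra hja'
        push_neg at hja'
        have := svf_lt_svf T hja' hja
        rw [haeq] at this; linarith
      · by_contra hjb'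
        push_neg at hjb'
        have := svf_le_svf T hjb' hjn
        rw [hbeq] at this; linarith
    · rintro ⟨h1, h2⟩
      have hjn : j < (T.sort (·≤·)).length := lt_trans h2 hjb
      refine ⟨by omega, ?_, ?_⟩
      · have := svf_le_svf T h1 hjn; rw [haeq] at this; exact this
      · have := svf_lt_svf T h2 hjb; rw [hbeq] at this; exact this
  rw [hfil, Finset.sum_Ico_eq_sub _ hjab,
    Finset.sum_range_sub (fun j => svf T j), Finset.sum_range_sub (fun j => svf T j),
    haeq, hbeq]
  ring

lemma ind_apply {P : Type*} (A : Set P) (p : P) [Decidable (p ∈ A)] :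
    ind A p = if p ∈ A then 1 else 0 := by
  simp [ind, Set.indicator_apply]

end AuxGeneric

/-- For a nonnegative dominant marking `λ` with decomposition coefficients `α`, and with
`p <' q ↔ p < q ∧ p ∉ P* ∪ O`, the marked chain-order polytope `O_{C,O}(P, lt, λ)` equals
the Minkowski sum `Σ_{K ∈ 𝒥*} α_K · R_{ω_K}(P, lt, lt')`. -/
theorem stmt19 {P : Type*} [Fintype P] (lt : P → P → Prop)
    (hirr : ∀ p, ¬ lt p p) (htr : ∀ a b c, lt a b → lt b c → lt a c)
    (Pstar C O : Set P)
    (hmin : ∀ p : P, (∀ q, ¬ lt q p) → p ∈ Pstar)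
    (hmax : ∀ p : P, (∀ q, ¬ lt p q) → p ∈ Pstar)
    (hCO : C ∪ O = Pstarᶜ) (hdisj : C ∩ O = ∅)
    (lam : P → ℤ) (α : Set P → ℕ)
    (hlamnn : ∀ p ∈ Pstar, 0 ≤ lam p)
    (hdom : ∀ p q : P, p ∈ Pstar → q ∈ Pstar → lt p q → lam q ≤ lam p)
    (hαsupp : ∀ K : Set P, α K ≠ 0 → K ∈ idealsOn lt Pstar ∧ K.Nonempty)
    (hαchain : ∀ K1 K2 : Set P, α K1 ≠ 0 → α K2 ≠ 0 → K1 ⊆ K2 ∨ K2 ⊆ K1)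
    (hαsum : ∀ p ∈ Pstar, lam p =
      ∑ K ∈ (Set.toFinite (idealsOn lt Pstar)).toFinset, (α K : ℤ) * K.indicator 1 p)
    (lt' : P → P → Prop)
    (hlt' : ∀ p q, lt' p q ↔ (lt p q ∧ p ∉ Pstar ∪ O)) :
    MCOP lt Pstar C O (fun p => (lam p : ℝ)) = RPPmarked lt lt' Pstar α := by
  classical
  letI : IsTrans P lt := ⟨htr⟩
  letI : IsIrrefl P lt := ⟨hirr⟩
  have wfLT : WellFounded lt := Finite.wellFounded_of_trans_of_irrefl lt
  letI : IsTrans P (fun a b : P => lt b a) := ⟨fun a b c h1 h2 => htr _ _ _ h2 h1⟩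
  letI : IsIrrefl P (fun a b : P => lt b a) := ⟨hirr⟩
  have wfGT : WellFounded (fun a b : P => lt b a) :=
    Finite.wellFounded_of_trans_of_irrefl _
  have hPnotC : ∀ p : P, p ∉ C → p ∈ Pstar ∪ O := by
    intro p hp
    by_cases h : p ∈ Pstar
    · exact Or.inl h
    · have h2 : p ∈ Pstarᶜ := h
      rw [← hCO] at h2
      rcases h2 with h' | h'
      · exact absurd h' hp
      · exact Or.inr h'
  have hCnotP : ∀ p ∈ C, p ∉ Pstar ∪ O := fun p hp => mem_C_not_PO hCO hdisj hp
  have hcompl : ∀ p : P, p ∈ C ∪ O → p ∉ Pstar := by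
    intro p hp
    rw [hCO] at hp
    exact hp
  have hcast : ∀ p ∈ Pstar,
      (∑ K ∈ (Set.toFinite (idealsOn lt Pstar)).toFinset, (α K : ℝ) * K.indicator 1 p)
        = ((lam p : ℤ) : ℝ) := by
    intro p hp
    rw [hαsum p hp, Int.cast_sum]
    apply Finset.sum_congr rfl
    intro K _
    by_cases hK : p ∈ K
    · simp [Set.indicator_of_mem hK]
    · simp [Set.indicator_of_notMem hK]
  ext x
  constructor
  · -- hard direction : MCOP ⊆ Minkowski sum
    intro hx
    obtain ⟨hx1, hx2, hx3⟩ := hx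
    set 𝒥 := (Set.toFinite (idealsOn lt Pstar)).toFinset with h𝒥
    -- basic facts about x
    have hr0 : ∀ a b, a ∈ Pstar ∪ O → b ∈ Pstar ∪ O → lt a b → x b ≤ x a := by
      intro a b ha hb hab
      have h := hx3 0 a b (fun i => i.elim0) ha hb (fun i => i.elim0) hab
        (fun i => i.elim0) (fun i => i.elim0)
      have h0 : (0:ℝ) ≤ x a - x b := by simpa using h
      linarith
    have hx0 : ∀ p, 0 ≤ x p := by
      intro p
      by_cases hp : p ∈ C
      · exact hx2 p hp
      · rcases hPnotC p hp with hP | hO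
        · rw [hx1 p hP]
          show (0:ℝ) ≤ (lam p : ℝ)
          exact_mod_cast hlamnn p hP
        · obtain ⟨M, hM1, hM2⟩ := exists_top lt htr wfGT p
          have hMP : M ∈ Pstar := hmax M hM2
          rcases hM1 with rfl | hltpM
          · exact absurd hMP (hcompl M (Or.inr hO))
          · have h1 := hr0 p M (Or.inr hO) (Or.inl hMP) hltpM
            have h2 : (0:ℝ) ≤ x M := by
              rw [hx1 M hMP]
              show (0:ℝ) ≤ (lam M : ℝ)
              exact_mod_cast hlamnn M hMP
            linarith
    set W := Wf lt C x wfGT with hWdef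
    set U := Uf lt C x wfGT with hUdef
    have hWC : ∀ p ∈ C, W p = x p + U p := fun p hp => Wf_of_mem lt C x wfGT hp
    have hUnn : ∀ p, 0 ≤ U p := fun p => Uf_nonneg lt C x wfGT p
    have hUattain : ∀ p, U p = 0 ∨ ∃ q, lt p q ∧ U p = W q := fun p => Uf_attain lt C x wfGT p
    have hleU : ∀ p q, lt p q → W q ≤ U p := fun p q h => le_Uf lt C x wfGT h
    have hUle' : ∀ (p : P) (t : ℝ), 0 ≤ t → (∀ q, lt p q → W q ≤ t) → U p ≤ t :=
      fun p t ht h => Uf_le lt C x wfGT ht h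
    have hWnC : ∀ p, p ∉ C → W p = x p := fun p hp => Wf_of_not_mem lt C x wfGT hp
    have hWnn : ∀ p, 0 ≤ W p := by
      intro p
      by_cases hp : p ∈ C
      · rw [hWC p hp]
        exact add_nonneg (hx0 p) (hUnn p)
      · rw [hWnC p hp]; exact hx0 p
    -- chain extraction
    have hA : ∀ p, p ∈ C → ∃ r, ∃ c : Fin (r+1) → P, ∃ b : P,
        c 0 = p ∧ (∀ i, c i ∈ C) ∧ b ∈ Pstar ∪ O ∧
        (∀ i j, i < j → lt (c i) (c j)) ∧ (∀ i, lt (c i) b) ∧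
        W p = (∑ i, x (c i)) + x b := by
      intro p
      refine wfGT.induction (C := fun p => p ∈ C → ∃ r, ∃ c : Fin (r+1) → P, ∃ b : P,
        c 0 = p ∧ (∀ i, c i ∈ C) ∧ b ∈ Pstar ∪ O ∧
        (∀ i j, i < j → lt (c i) (c j)) ∧ (∀ i, lt (c i) b) ∧
        W p = (∑ i, x (c i)) + x b) p ?_
      intro p IH hp
      have hfin1 : ∀ (i j : Fin 1), i < j → lt ((fun _ => p) i) ((fun _ => p) j) := by
        intro i j hij
        have h1 := i.isLt
        have h2 := j.isLt
        have h3 : (i:ℕ) < (j:ℕ) := hij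
        omega
      rcases hUattain p with hU0 | ⟨q, hpq, hUq⟩
      · obtain ⟨M, hM1, hM2⟩ := exists_top lt htr wfGT p
        have hMP : M ∈ Pstar := hmax M hM2
        have hpM : lt p M := by
          rcases hM1 with rfl | h
          · exact absurd hMP (hcompl M (Or.inl hp))
          · exact h
        have hWM : W M = x M := hWnC M (fun hMC => hcompl M (Or.inl hMC) hMP)
        have hxM : x M = 0 := by
          have h1 : W M ≤ U p := hleU p M hpM
          have h2 := hx0 M
          rw [hWM] at h1
          rw [hU0] at h1
          linarith
        refine ⟨0, fun _ => p, M, rfl, fun _ => hp, Or.inl hMP, hfin1, fun _ => hpM, ?_⟩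
        rw [hWC p hp, hU0, hxM]
        simp
      · by_cases hqC : q ∈ C
        · obtain ⟨r', c', b', hc0, hcC, hb, hmono, hcb, hsum⟩ := IH q hpq hqC
          have hpc0 : lt p (c' 0) := by rw [hc0]; exact hpq
          refine ⟨r'+1, Fin.cons p c', b', Fin.cons_zero _ _, ?_, hb, ?_, ?_, ?_⟩
          · intro i
            rcases Fin.eq_zero_or_eq_succ i with rfl | ⟨i', rfl⟩
            · rw [Fin.cons_zero]; exact hp
            · rw [Fin.cons_succ]; exact hcC i'
          · intro i j hij
            rcases Fin.eq_zero_or_eq_succ j with rfl | ⟨j', rfl⟩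
            · exact absurd hij (Fin.not_lt_zero i)
            · rcases Fin.eq_zero_or_eq_succ i with rfl | ⟨i', rfl⟩
              · rw [Fin.cons_zero, Fin.cons_succ]
                by_cases hj0 : j' = 0
                · subst hj0; exact hpc0
                · exact htr _ _ _ hpc0 (hmono 0 j' (Fin.pos_of_ne_zero hj0))
              · rw [Fin.cons_succ, Fin.cons_succ]
                exact hmono i' j' (Fin.succ_lt_succ_iff.mp hij)
          · intro i
            rcases Fin.eq_zero_or_eq_succ i with rfl | ⟨i', rfl⟩
            · rw [Fin.cons_zero]
              exact htr _ _ _ hpc0 (hcb 0)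
            · rw [Fin.cons_succ]; exact hcb i'
          · have hsplit : (∑ i : Fin (r'+1+1), x ((Fin.cons p c' : Fin (r'+1+1) → P) i))
                = x p + ∑ i : Fin (r'+1), x (c' i) := by
              rw [Fin.sum_univ_succ]
              simp
            rw [hWC p hp, hUq, hsum, hsplit]
            ring
        · have hqPO : q ∈ Pstar ∪ O := hPnotC q hqC
          have hWq : W q = x q := hWnC q hqC
          refine ⟨0, fun _ => p, q, rfl, fun _ => hp, hqPO, hfin1, fun _ => hpq, ?_⟩
          rw [hWC p hp, hUq, hWq]
          simp
    have hL1 : ∀ p, p ∈ C → ∀ a, a ∈ Pstar ∪ O → lt a p → W p ≤ x a := by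
      intro p hp a ha hap
      obtain ⟨r, c, b, hc0, hcC, hb, hmono, hcb, hsum⟩ := hA p hp
      have hap' : lt a (c 0) := by rw [hc0]; exact hap
      have hac : ∀ i, lt a (c i) := by
        intro i
        rcases Fin.eq_zero_or_eq_succ i with rfl | ⟨i', rfl⟩
        · exact hap'
        · exact htr _ _ _ hap' (hmono 0 i'.succ (Fin.succ_pos i'))
      have hab : lt a b := htr _ _ _ hap' (hcb 0)
      have h := hx3 (r+1) a b c ha hb hcC hab (fun i => ⟨hac i, hcb i⟩) hmono
      have hxb := hx0 b
      linarith [hsum]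
    have hWanti : ∀ p q, lt p q → W q ≤ W p := by
      intro p q hpq
      by_cases hp : p ∈ C
      · rw [hWC p hp]
        have h1 : W q ≤ U p := hleU p q hpq
        have h2 := hx0 p
        linarith
      · have hpPO := hPnotC p hp
        rw [hWnC p hp]
        by_cases hq : q ∈ C
        · exact hL1 q hq p hpPO hpq
        · rw [hWnC q hq]
          exact hr0 p q hpPO (hPnotC q hq) hpq
    -- the total mass and the band structure
    set sig := ∑ K ∈ 𝒥, (α K : ℝ) with hsig
    have hRsum : ∀ p ∈ Pstar, x p = ∑ K ∈ 𝒥, (α K : ℝ) * K.indicator 1 p := by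
      intro p hp
      rw [hx1 p hp]
      exact (hcast p hp).symm
    have hlamle : ∀ p ∈ Pstar, x p ≤ sig := by
      intro p hp
      rw [hRsum p hp, hsig]
      apply Finset.sum_le_sum
      intro K _
      by_cases hK : p ∈ K
      · simp [Set.indicator_of_mem hK]
      · simp [Set.indicator_of_notMem hK]
    have hsignn : (0:ℝ) ≤ sig := by
      rw [hsig]; positivity
    have hWub : ∀ p, W p ≤ sig := by
      intro p
      by_cases hP : p ∈ Pstar
      · rw [hWnC p (fun hc => hcompl p (Or.inl hc) hP)]
        exact hlamle p hP
      · obtain ⟨m, hm1, hm2⟩ := exists_bot lt htr wfLT p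
        have hmP : m ∈ Pstar := hmin m hm2
        have hmp : lt m p := by
          rcases hm1 with rfl | h
          · exact absurd hmP hP
          · exact h
        by_cases hp : p ∈ C
        · exact le_trans (hL1 p hp m (Or.inl hmP) hmp) (hlamle m hmP)
        · rw [hWnC p hp]
          exact le_trans (hr0 m p (Or.inl hmP) (hPnotC p hp) hmp) (hlamle m hmP)
    set supp := 𝒥.filter (fun K => α K ≠ 0) with hsupp
    have hsuppmem : ∀ K ∈ supp, K ∈ idealsOn lt Pstar ∧ α K ≠ 0 := by
      intro K hK
      obtain ⟨h1, h2⟩ := Finset.mem_filter.mp hK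
      exact ⟨(Set.Finite.mem_toFinset _).mp h1, h2⟩
    have hsuppchain : ∀ K1 ∈ supp, ∀ K2 ∈ supp, K1 ⊆ K2 ∨ K2 ⊆ K1 := by
      intro K1 h1 K2 h2
      exact hαchain K1 K2 (hsuppmem K1 h1).2 (hsuppmem K2 h2).2
    set Sf := fun K : Set P => ∑ K' ∈ supp.filter (fun K' => K ⊆ K'), (α K' : ℝ) with hSdef
    have hsigs : sig = ∑ K ∈ supp, (α K : ℝ) := by
      rw [hsig, hsupp]
      exact (Finset.sum_filter_of_ne (fun K _ h => by
        intro h0; rw [h0] at h; simp at h)).symm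
    have hSnn : ∀ K, 0 ≤ Sf K := by
      intro K; rw [hSdef]; positivity
    have hSle : ∀ K, Sf K ≤ sig := by
      intro K
      rw [hSdef, hsigs]
      apply Finset.sum_le_sum_of_subset_of_nonneg (Finset.filter_subset _ _)
      intro K' _ _; positivity
    have hSerase : ∀ K ∈ supp, Sf K - (α K : ℝ) =
        ∑ K' ∈ (supp.filter (fun K' => K ⊆ K')).erase K, (α K' : ℝ) := by
      intro K hK
      have hKm : K ∈ supp.filter (fun K' => K ⊆ K') :=
        Finset.mem_filter.mpr ⟨hK, subset_rfl⟩
      have := Finset.add_sum_erase _ (fun K' : Set P => (α K' : ℝ)) hKm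
      rw [hSdef]
      simp only at this ⊢
      linarith
    have hbandnn : ∀ K ∈ supp, (0:ℝ) ≤ Sf K - (α K : ℝ) := by
      intro K hK
      rw [hSerase K hK]
      positivity
    have hlamval : ∀ p ∈ Pstar, x p = ∑ K' ∈ supp.filter (fun K' => p ∈ K'), (α K' : ℝ) := by
      intro p hp
      rw [hRsum p hp]
      have h1 : ∑ K ∈ 𝒥, (α K : ℝ) * K.indicator 1 p
          = ∑ K ∈ 𝒥.filter (fun K => p ∈ K), (α K : ℝ) := by
        rw [Finset.sum_filter]
        apply Finset.sum_congr rfl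
        intro K _
        by_cases hK : p ∈ K
        · simp [Set.indicator_of_mem hK, hK]
        · simp [Set.indicator_of_notMem hK, hK]
      rw [h1, hsupp, Finset.filter_comm]
      exact (Finset.sum_filter_of_ne (fun K _ h => by
        intro h0; rw [h0] at h; simp at h)).symm
    have hband1 : ∀ K ∈ supp, ∀ p ∈ Pstar, p ∈ K → Sf K ≤ x p := by
      intro K hK p hp hpK
      rw [hlamval p hp, hSdef]
      apply Finset.sum_le_sum_of_subset_of_nonneg
      · apply Finset.monotone_filter_right
        intro K' _ hsub
        exact hsub hpK
      · intro K' _ _; positivity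
    have hband2 : ∀ K ∈ supp, ∀ p ∈ Pstar, p ∉ K → x p ≤ Sf K - (α K : ℝ) := by
      intro K hK p hp hpK
      rw [hlamval p hp, hSerase K hK]
      apply Finset.sum_le_sum_of_subset_of_nonneg
      · intro K' hK'
        obtain ⟨hK's, hpK'⟩ := Finset.mem_filter.mp hK'
        refine Finset.mem_erase.mpr ⟨?_, Finset.mem_filter.mpr ⟨hK's, ?_⟩⟩
        · rintro rfl; exact hpK hpK'
        · rcases hsuppchain K' hK's K hK with h | h
          · exact absurd (h hpK') hpK
          · exact h
      · intro K' _ _; positivity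
    have hcover : ∀ t : ℝ, 0 ≤ t → t < sig →
        ∃ K ∈ supp, Sf K - (α K : ℝ) ≤ t ∧ t < Sf K := by
      intro t ht0 htσ
      have hne : supp.Nonempty := by
        by_contra h
        rw [Finset.not_nonempty_iff_eq_empty] at h
        rw [hsigs, h, Finset.sum_empty] at htσ
        linarith
      obtain ⟨Km, hKm, hKmin⟩ := chain_top (fun A B : Set P => B ⊆ A) (fun _ => subset_rfl)
        (fun a b c h1 h2 => h2.trans h1) supp
        (fun a ha b hb => hsuppchain b hb a ha) hne
      have hSKm : Sf Km = sig := by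
        rw [hSdef, hsigs]
        simp only
        rw [Finset.filter_true_of_mem (fun K' hK' => hKmin K' hK')]
      have hAne : (supp.filter (fun K => t < Sf K)).Nonempty :=
        ⟨Km, Finset.mem_filter.mpr ⟨hKm, by rw [hSKm]; exact htσ⟩⟩
      obtain ⟨K, hKA, hKmax⟩ := chain_top (· ⊆ ·) (fun _ => subset_rfl)
        (fun a b c h1 h2 => h1.trans h2) (supp.filter (fun K => t < Sf K))
        (fun K1 h1 K2 h2 => hsuppchain K1 (Finset.mem_of_mem_filter _ h1)
          K2 (Finset.mem_of_mem_filter _ h2)) hAne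
      have hKs : K ∈ supp := Finset.mem_of_mem_filter _ hKA
      have htS : t < Sf K := (Finset.mem_filter.mp hKA).2
      refine ⟨K, hKs, ?_, htS⟩
      set N := supp.filter (fun K' => K ⊆ K' ∧ K' ≠ K) with hN
      have hSN : Sf K - (α K : ℝ) = ∑ K' ∈ N, (α K' : ℝ) := by
        rw [hSerase K hKs]
        apply Finset.sum_congr ?_ (fun _ _ => rfl)
        ext K'
        simp only [hN, Finset.mem_erase, Finset.mem_filter]
        tauto
      by_cases hNne : N.Nonempty
      · obtain ⟨K2, hK2, hK2min⟩ := chain_top (fun A B : Set P => B ⊆ A) (fun _ => subset_rfl)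
          (fun a b c h1 h2 => h2.trans h1) N
          (fun K1 h1 K2 h2 => hsuppchain K2 (Finset.mem_of_mem_filter _ h2)
            K1 (Finset.mem_of_mem_filter _ h1)) hNne
        have hK2s : K2 ∈ supp := Finset.mem_of_mem_filter _ hK2
        have hKK2 : K ⊆ K2 := (Finset.mem_filter.mp hK2).2.1
        have hK2ne : K2 ≠ K := (Finset.mem_filter.mp hK2).2.2
        have hNK2 : supp.filter (fun K' => K2 ⊆ K') = N := by
          ext K'
          simp only [hN, Finset.mem_filter]
          constructor
          · rintro ⟨h1, h2⟩
            refine ⟨h1, hKK2.trans h2, ?_⟩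
            rintro rfl
            exact hK2ne (Set.Subset.antisymm h2 hKK2)
          · rintro ⟨h1, h2, h3⟩
            exact ⟨h1, hK2min K' (Finset.mem_filter.mpr ⟨h1, h2, h3⟩)⟩
        have hSK2 : Sf K2 = Sf K - (α K : ℝ) := by
          rw [hSN, hSdef]
          simp only
          rw [hNK2]
        have hK2A : K2 ∉ supp.filter (fun K => t < Sf K) := by
          intro hmem
          exact hK2ne (Set.Subset.antisymm (hKmax K2 hmem) hKK2)
        have : ¬ t < Sf K2 := fun h => hK2A (Finset.mem_filter.mpr ⟨hK2s, h⟩)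
        linarith [hSK2]
      · rw [Finset.not_nonempty_iff_eq_empty] at hNne
        rw [hSN, hNne, Finset.sum_empty] at *
        linarith [hSN]
    have hKsubP : ∀ K ∈ supp, K ⊆ Pstar := fun K hK => ((hsuppmem K hK).1).1
    have hWPstar : ∀ p ∈ Pstar, W p = x p :=
      fun p hp => hWnC p (fun hc => hcompl p (Or.inl hc) hp)
    have hlevelK : ∀ K ∈ supp, ∀ t : ℝ, Sf K - (α K : ℝ) ≤ t → t < Sf K →
        {q : P | t < W q} ∩ Pstar = K := by
      intro K hK t h1 h2
      ext p
      simp only [Set.mem_inter_iff, Set.mem_setOf_eq]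
      constructor
      · rintro ⟨hWp, hp⟩
        by_contra hpK
        have hb := hband2 K hK p hp hpK
        rw [← hWPstar p hp] at hb
        linarith
      · intro hpK
        have hp : p ∈ Pstar := hKsubP K hK hpK
        have hb := hband1 K hK p hp hpK
        rw [← hWPstar p hp] at hb
        exact ⟨by linarith, hp⟩
    -- the level set finset
    set T := ((Finset.image W Finset.univ ∪ Finset.image Sf supp) ∪
        Finset.image (fun K => Sf K - (α K : ℝ)) supp) ∪ {0} with hT
    have hWT : ∀ p, W p ∈ T := by
      intro p
      rw [hT]
      exact Finset.mem_union_left _ (Finset.mem_union_left _ (Finset.mem_union_left _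
        (Finset.mem_image_of_mem W (Finset.mem_univ p))))
    have hST : ∀ K ∈ supp, Sf K ∈ T := by
      intro K hK
      rw [hT]
      exact Finset.mem_union_left _ (Finset.mem_union_left _ (Finset.mem_union_right _
        (Finset.mem_image_of_mem Sf hK)))
    have hS'T : ∀ K ∈ supp, Sf K - (α K : ℝ) ∈ T := by
      intro K hK
      rw [hT]
      exact Finset.mem_union_left _ (Finset.mem_union_right _
        (Finset.mem_image_of_mem _ hK))
    have h0T : (0:ℝ) ∈ T := by
      rw [hT]
      exact Finset.mem_union_right _ (Finset.mem_singleton_self 0)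
    have hTnn : ∀ t ∈ T, (0:ℝ) ≤ t := by
      intro t ht
      rw [hT] at ht
      rcases Finset.mem_union.mp ht with h | h
      · rcases Finset.mem_union.mp h with h | h
        · rcases Finset.mem_union.mp h with h | h
          · obtain ⟨p, _, rfl⟩ := Finset.mem_image.mp h
            exact hWnn p
          · obtain ⟨K, hK, rfl⟩ := Finset.mem_image.mp h
            exact hSnn K
        · obtain ⟨K, hK, rfl⟩ := Finset.mem_image.mp h
          exact hbandnn K hK
      · rw [Finset.mem_singleton.mp h]
    have hTub : ∀ t ∈ T, t ≤ sig := by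
      intro t ht
      rw [hT] at ht
      rcases Finset.mem_union.mp ht with h | h
      · rcases Finset.mem_union.mp h with h | h
        · rcases Finset.mem_union.mp h with h | h
          · obtain ⟨p, _, rfl⟩ := Finset.mem_image.mp h
            exact hWub p
          · obtain ⟨K, hK, rfl⟩ := Finset.mem_image.mp h
            exact hSle K
        · obtain ⟨K, hK, rfl⟩ := Finset.mem_image.mp h
          have := hSle K
          have : (0:ℝ) ≤ (α K : ℝ) := by positivity
          linarith [hSle K]
      · rw [Finset.mem_singleton.mp h]
        exact hsignn
    have hUT : ∀ p ∈ C, U p ∈ T := by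
      intro p hp
      rcases hUattain p with h | ⟨q, _, h⟩
      · rw [h]
        exact h0T
      · rw [h]
        exact hWT q
    have hUWle : ∀ p ∈ C, U p ≤ W p := by
      intro p hp
      rw [hWC p hp]
      linarith [hx0 p]
    -- level ideals
    have hlvl_ideal : ∀ t : ℝ, IsLowerIdeal lt {q : P | t < W q} := by
      intro t p q hpq hq
      exact lt_of_lt_of_le hq (hWanti p q hpq)
    have hkeymem : ∀ j : ℕ, {q : P | svf T j < W q} ∩ Pstar ∈ 𝒥 := by
      intro j
      rw [h𝒥, Set.Finite.mem_toFinset]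
      refine ⟨Set.inter_subset_right, ?_⟩
      intro p q hp hq hpq hqK
      exact ⟨lt_of_lt_of_le hqK.1 (hWanti p q hpq), hp⟩
    have hsvnn : ∀ j, j < (T.sort (·≤·)).length → 0 ≤ svf T j :=
      fun j hj => hTnn _ (svf_mem T hj)
    -- maximality characterizations
    have hmaxC : ∀ p ∈ C, ∀ t : ℝ, 0 ≤ t →
        (p ∈ maxElems lt' {q : P | t < W q} ↔ (U p ≤ t ∧ t < W p)) := by
      intro p hp t ht
      rw [mem_maxElems]
      constructor
      · rintro ⟨h1, h2⟩
        refine ⟨hUle' p _ ht ?_, h1⟩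
        intro q hq
        by_contra hWq
        push_neg at hWq
        exact h2 q hWq ((hlt' p q).mpr ⟨hq, hCnotP p hp⟩)
      · rintro ⟨h1, h2⟩
        refine ⟨h2, ?_⟩
        intro q hq hlt'pq
        have h3 : W q ≤ U p := hleU p q ((hlt' p q).mp hlt'pq).1
        have h4 : t < W q := hq
        linarith
    have hmaxPO : ∀ p, p ∉ C → ∀ t : ℝ,
        (p ∈ maxElems lt' {q : P | t < W q} ↔ t < W p) :=
      fun p hp t => maxElems_mem_iff_PO hlt' (hPnotC p hp)
    -- the decomposition of x over levels
    have hxdec : x = ∑ j ∈ Finset.range ((T.sort (·≤·)).length - 1),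
        (svf T (j+1) - svf T j) • ind (maxElems lt' {q : P | svf T j < W q}) := by
      funext p
      rw [Finset.sum_apply]
      simp only [Pi.smul_apply, smul_eq_mul]
      by_cases hp : p ∈ C
      · have hterm : ∀ j ∈ Finset.range ((T.sort (·≤·)).length - 1),
            (svf T (j+1) - svf T j) * ind (maxElems lt' {q : P | svf T j < W q}) p
              = if U p ≤ svf T j ∧ svf T j < W p then (svf T (j+1) - svf T j) else 0 := by
          intro j hj
          have hjn : j < (T.sort (·≤·)).length := by
            have := Finset.mem_range.mp hj; omega
          have ht0 : 0 ≤ svf T j := hsvnn j hjn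
          rw [ind_apply]
          by_cases hc : U p ≤ svf T j ∧ svf T j < W p
          · rw [if_pos ((hmaxC p hp _ ht0).mpr hc), if_pos hc]; ring
          · rw [if_neg (fun hm => hc ((hmaxC p hp _ ht0).mp hm)), if_neg hc]; ring
        rw [Finset.sum_congr rfl hterm, ← Finset.sum_filter,
          sorted_tele T (hUT p hp) (hWT p) (hUWle p hp)]
        have := hWC p hp
        linarith
      · have hterm : ∀ j ∈ Finset.range ((T.sort (·≤·)).length - 1),
            (svf T (j+1) - svf T j) * ind (maxElems lt' {q : P | svf T j < W q}) p
              = if (0:ℝ) ≤ svf T j ∧ svf T j < W p then (svf T (j+1) - svf T j) else 0 := by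
          intro j hj
          have hjn : j < (T.sort (·≤·)).length := by
            have := Finset.mem_range.mp hj; omega
          have ht0 : 0 ≤ svf T j := hsvnn j hjn
          rw [ind_apply]
          by_cases hc : svf T j < W p
          · rw [if_pos ((hmaxPO p hp _).mpr hc), if_pos ⟨ht0, hc⟩]; ring
          · rw [if_neg (fun hm => hc ((hmaxPO p hp _).mp hm)),
              if_neg (fun hcc => hc hcc.2)]; ring
        rw [Finset.sum_congr rfl hterm, ← Finset.sum_filter,
          sorted_tele T h0T (hWT p) (hWnn p)]
        have := hWnC p hp
        linarith
    -- fiber sums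
    have hfiber : ∀ K ∈ 𝒥, ∑ j ∈ (Finset.range ((T.sort (·≤·)).length - 1)).filter
        (fun j => {q : P | svf T j < W q} ∩ Pstar = K), (svf T (j+1) - svf T j)
          = (α K : ℝ) := by
      intro K hK
      have hjband : ∀ j ∈ Finset.range ((T.sort (·≤·)).length - 1),
          ∃ K0 ∈ supp, (Sf K0 - (α K0 : ℝ) ≤ svf T j ∧ svf T j < Sf K0) ∧
            {q : P | svf T j < W q} ∩ Pstar = K0 := by
        intro j hj
        have hjr := Finset.mem_range.mp hj
        have hjn : j < (T.sort (·≤·)).length := by omega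
        have hn1 : (T.sort (·≤·)).length - 1 < (T.sort (·≤·)).length := by omega
        have h0 : 0 ≤ svf T j := hsvnn j hjn
        have hσ' : svf T j < sig := by
          have h1 : svf T j < svf T ((T.sort (·≤·)).length - 1) := svf_lt_svf T hjr hn1
          have h2 : svf T ((T.sort (·≤·)).length - 1) ≤ sig := hTub _ (svf_mem T hn1)
          linarith
        obtain ⟨K0, hK0, h1, h2⟩ := hcover _ h0 hσ'
        exact ⟨K0, hK0, ⟨h1, h2⟩, hlevelK K0 hK0 _ h1 h2⟩
      by_cases hKsupp : K ∈ supp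
      · have hfe : (Finset.range ((T.sort (·≤·)).length - 1)).filter
            (fun j => {q : P | svf T j < W q} ∩ Pstar = K)
            = (Finset.range ((T.sort (·≤·)).length - 1)).filter
              (fun j => Sf K - (α K : ℝ) ≤ svf T j ∧ svf T j < Sf K) := by
          apply Finset.filter_congr
          intro j hj
          constructor
          · intro hkey
            obtain ⟨K0, hK0s, hb, hkey0⟩ := hjband j hj
            have hKK0 : K = K0 := by rw [← hkey, hkey0]
            rw [hKK0]
            exact hb
          · intro hb
            exact hlevelK K hKsupp _ hb.1 hb.2
        rw [hfe, sorted_tele T (hS'T K hKsupp) (hST K hKsupp) (by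
          have : (0:ℝ) ≤ (α K : ℝ) := by positivity
          linarith)]
        ring
      · have hα0 : α K = 0 := by
          by_contra h
          exact hKsupp (Finset.mem_filter.mpr ⟨hK, h⟩)
        have hfe : (Finset.range ((T.sort (·≤·)).length - 1)).filter
            (fun j => {q : P | svf T j < W q} ∩ Pstar = K) = ∅ := by
          rw [Finset.filter_eq_empty_iff]
          intro j hj hkey
          obtain ⟨K0, hK0s, _, hkey0⟩ := hjband j hj
          have : K = K0 := by rw [← hkey, hkey0]
          rw [this] at hα0
          exact (hsuppmem K0 hK0s).2 hα0
        rw [hfe, Finset.sum_empty, hα0]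
        simp
    have hgapnn : ∀ j ∈ Finset.range ((T.sort (·≤·)).length - 1),
        (0:ℝ) ≤ svf T (j+1) - svf T j := by
      intro j hj
      have hjr := Finset.mem_range.mp hj
      have hjn : j + 1 < (T.sort (·≤·)).length := by omega
      have := svf_le_svf T (Nat.le_succ j) hjn
      linarith
    -- membership of each fiber sum in the dilated fundamental polytope
    have hz : ∀ K ∈ 𝒥, (∑ j ∈ (Finset.range ((T.sort (·≤·)).length - 1)).filter
        (fun j => {q : P | svf T j < W q} ∩ Pstar = K),
        (svf T (j+1) - svf T j) • ind (maxElems lt' {q : P | svf T j < W q}))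
          ∈ dilate (α K) (RPPfund lt lt' Pstar K) := by
      intro K hK
      by_cases hα0 : α K = 0
      · have hsum0 := hfiber K hK
        rw [hα0] at hsum0
        simp only [Nat.cast_zero] at hsum0
        have hzero : ∀ j ∈ (Finset.range ((T.sort (·≤·)).length - 1)).filter
            (fun j => {q : P | svf T j < W q} ∩ Pstar = K),
            (svf T (j+1) - svf T j) • ind (maxElems lt' {q : P | svf T j < W q}) = 0 := by
          intro j hj
          have hg0 : svf T (j+1) - svf T j = 0 :=
            (Finset.sum_eq_zero_iff_of_nonneg
              (fun j' hj' => hgapnn j' (Finset.mem_of_mem_filter _ hj'))).mp hsum0 j hj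
          rw [hg0, zero_smul]
        rw [Finset.sum_eq_zero hzero]
        obtain ⟨pt, hpt⟩ := RPPfund_nonempty htr lt'
          (K := K) ((Set.Finite.mem_toFinset _).mp (h𝒥 ▸ hK))
        refine ⟨pt, hpt, ?_⟩
        rw [hα0]
        simp
      · have hαpos : (0:ℝ) < (α K : ℝ) := by
          have := Nat.pos_of_ne_zero hα0
          exact_mod_cast this
        set fil := (Finset.range ((T.sort (·≤·)).length - 1)).filter
          (fun j => {q : P | svf T j < W q} ∩ Pstar = K) with hfil
        have hsum1 : ∑ j ∈ fil, (svf T (j+1) - svf T j) / (α K : ℝ) = 1 := by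
          rw [← Finset.sum_div, hfil, hfiber K hK]
          field_simp
        refine ⟨∑ j ∈ fil, ((svf T (j+1) - svf T j) / (α K : ℝ)) •
          ind (maxElems lt' {q : P | svf T j < W q}), ?_, ?_⟩
        · have hmem := Finset.centerMass_mem_convexHull fil
            (w := fun j => (svf T (j+1) - svf T j) / (α K : ℝ))
            (fun j hj => div_nonneg (hgapnn j (Finset.mem_of_mem_filter _ hj)) hαpos.le)
            (by rw [hsum1]; norm_num)
            (z := fun j => ind (maxElems lt' {q : P | svf T j < W q}))
            (fun j hj => show _ ∈ {y : P → ℝ | ∃ J : Set P, IsLowerIdeal lt J ∧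
                J ∩ Pstar = K ∧ y = ind (maxElems lt' J)} from
              ⟨{q : P | svf T j < W q}, hlvl_ideal _, (Finset.mem_filter.mp hj).2, rfl⟩)
          rw [Finset.centerMass_eq_of_sum_1 fil _ hsum1] at hmem
          exact hmem
        · show ((α K : ℝ)) • (∑ j ∈ fil, ((svf T (j+1) - svf T j) / (α K : ℝ)) •
              ind (maxElems lt' {q : P | svf T j < W q}))
            = ∑ j ∈ fil, (svf T (j+1) - svf T j) • ind (maxElems lt' {q : P | svf T j < W q})
          rw [Finset.smul_sum]
          apply Finset.sum_congr rfl
          intro j hj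
          rw [smul_smul]
          congr 1
          field_simp
    have hxsum : x = ∑ K ∈ 𝒥, ∑ j ∈ (Finset.range ((T.sort (·≤·)).length - 1)).filter
        (fun j => {q : P | svf T j < W q} ∩ Pstar = K),
        (svf T (j+1) - svf T j) • ind (maxElems lt' {q : P | svf T j < W q}) := by
      rw [hxdec]
      exact (Finset.sum_fiberwise_of_maps_to (fun j _ => hkeymem j) _).symm
    have hfinal := mem_finset_sum_sets 𝒥 _ _ hz
    rw [← hxsum] at hfinal
    exact hfinal
  · -- easy direction : Minkowski sum ⊆ MCOP
    intro hx
    have h := sum_dilate_subset_MCOP htr hCO hdisj lt' hlt' α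
      ((Set.toFinite (idealsOn lt Pstar)).toFinset) hx
    have heq := MCOP_congr (lt := lt) (C := C) (O := O)
      (l1 := fun p => ∑ K ∈ (Set.toFinite (idealsOn lt Pstar)).toFinset,
        (α K : ℝ) * K.indicator 1 p)
      (l2 := fun p => ((lam p : ℤ) : ℝ)) (fun p hp => hcast p hp)
    rw [heq] at h
    exact h
end
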